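/- Let Γ be a simple directed graph with at most one directed edge between any pair of vertices, let A be a set of vertices each of which is a source or a sink of Γ, and let w be any word over V(Γ). Then the equivalence class [w] in HK_Γ contains a subword of w which is multiplicity free with respect to every vertex in A (each vertex of A occurs at most once). -/

import Mathlib

/-- One-step Hecke-Kiselman edge relations for a directed graph with edge relation `E`. -/
def HKRel {V : Type*} (E : V → V → Prop) : FreeMonoid V → FreeMonoid V → Prop := fun a b =>
  (∃ x : V, a = FreeMonoid.of x * FreeMonoid.of x ∧ b = FreeMonoid.of x) ∨
  (∃ x y : V, x ≠ y ∧ ¬ E x y ∧ ¬ E y x ∧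
    a = FreeMonoid.of x * FreeMonoid.of y ∧ b = FreeMonoid.of y * FreeMonoid.of x) ∨
  (∃ x y : V, E x y ∧ ¬ E y x ∧
    a = FreeMonoid.of x * FreeMonoid.of y * FreeMonoid.of x ∧
    b = FreeMonoid.of y * FreeMonoid.of x * FreeMonoid.of y) ∨
  (∃ x y : V, E x y ∧ ¬ E y x ∧
    a = FreeMonoid.of x * FreeMonoid.of y * FreeMonoid.of x ∧
    b = FreeMonoid.of x * FreeMonoid.of y) ∨
  (∃ x y : V, E x y ∧ E y x ∧
    a = FreeMonoid.of x * FreeMonoid.of y * FreeMonoid.of x ∧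
    b = FreeMonoid.of y * FreeMonoid.of x * FreeMonoid.of y)

/-- The congruence on the free monoid generated by the Hecke-Kiselman relations. -/
def HKCon {V : Type*} (E : V → V → Prop) : Con (FreeMonoid V) := conGen (HKRel E)

/-- The Hecke-Kiselman monoid of the directed graph `(V, E)`. -/
def HK {V : Type*} (E : V → V → Prop) := (HKCon E).Quotient

instance {V : Type*} (E : V → V → Prop) : Monoid (HK E) :=
  inferInstanceAs (Monoid (HKCon E).Quotient)

/-- The canonical quotient map. -/
def HKmk {V : Type*} (E : V → V → Prop) : FreeMonoid V →* HK E := (HKCon E).mk'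

/-- The content of an element: vertices occurring in some representing word. -/
def elemContent {V : Type*} (E : V → V → Prop) (x : HK E) : Set V :=
  {v | ∃ w : FreeMonoid V, HKmk E w = x ∧ v ∈ FreeMonoid.toList w}


section HKaux

open FreeMonoid List

variable {V : Type*} [DecidableEq V] (E : V → V → Prop)

/-- List-level version of the HK congruence. -/
def HKR (l1 l2 : List V) : Prop := HKCon E (FreeMonoid.ofList l1) (FreeMonoid.ofList l2)

variable {E}

lemma HKR.refl (l : List V) : HKR E l l := (HKCon E).refl _
lemma HKR.symm {l1 l2 : List V} (h : HKR E l1 l2) : HKR E l2 l1 := (HKCon E).symm h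
lemma HKR.trans {l1 l2 l3 : List V} (h : HKR E l1 l2) (h' : HKR E l2 l3) : HKR E l1 l3 :=
  (HKCon E).trans h h'
lemma HKR.append {p q u v : List V} (h1 : HKR E p q) (h2 : HKR E u v) :
    HKR E (p ++ u) (q ++ v) := (HKCon E).mul h1 h2

lemma HKR.of_rel {a b : FreeMonoid V} (h : HKRel E a b) : HKCon E a b := ConGen.Rel.of _ _ h

lemma hkr_idem (a : V) : HKR E [a, a] [a] :=
  HKR.of_rel (Or.inl ⟨a, rfl, rfl⟩)

lemma hkr_comm {x y : V} (hxy : x ≠ y) (h1 : ¬ E x y) (h2 : ¬ E y x) :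
    HKR E [x, y] [y, x] :=
  HKR.of_rel (Or.inr (Or.inl ⟨x, y, hxy, h1, h2, rfl, rfl⟩))

lemma hkr_edge1 {x y : V} (h : E x y) (h' : ¬ E y x) : HKR E [x, y, x] [x, y] :=
  HKR.of_rel (Or.inr (Or.inr (Or.inr (Or.inl ⟨x, y, h, h', rfl, rfl⟩))))

lemma hkr_edge2 {x y : V} (h : E x y) (h' : ¬ E y x) : HKR E [x, y, x] [y, x, y] :=
  HKR.of_rel (Or.inr (Or.inr (Or.inl ⟨x, y, h, h', rfl, rfl⟩)))

/-- For a sink-type neighbor: `a y a ≡ y a` when `E y a`. -/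
lemma hkr_sink_nbr {a y : V} (h : E y a) (h' : ¬ E a y) : HKR E [a, y, a] [y, a] :=
  ((hkr_edge2 h h').symm).trans (hkr_edge1 h h')

/-- Source deletion: if `a` is a source and `a ∉ u`, then `a u a ≡ a u`. -/
lemma hkr_source_del {a : V} (ha : ∀ z, ¬ E z a) :
    ∀ u : List V, a ∉ u → HKR E (a :: u ++ [a]) (a :: u) := by
  intro u
  induction u with
  | nil => intro _; exact hkr_idem a
  | cons x v ih =>
    intro hnm
    have hxa : x ≠ a := fun h => hnm (h ▸ (List.mem_cons_self : x ∈ x :: v))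
    have hav : a ∉ v := fun h => hnm (List.mem_cons_of_mem _ h)
    by_cases hE : E a x
    · -- a x (v ++ [a]) ≡ a x a (v ++ [a]) ≡ a x (a v a) ≡ a x (a v) ≡ a x v
      have s1 : HKR E (a :: x :: v ++ [a]) (a :: x :: a :: v ++ [a]) := by
        have := HKR.append (p := [a,x]) (q := [a,x,a]) (u := v ++ [a]) (v := v ++ [a])
          (hkr_edge1 hE (ha x)).symm (HKR.refl _)
        simpa using this
      have s2 : HKR E (a :: x :: a :: v ++ [a]) (a :: x :: a :: v) := by
        have := HKR.append (p := [a,x]) (q := [a,x]) (HKR.refl _) (ih hav)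
        simpa using this
      have s3 : HKR E (a :: x :: a :: v) (a :: x :: v) := by
        have := HKR.append (p := [a,x,a]) (q := [a,x]) (hkr_edge1 hE (ha x)) (HKR.refl v)
        simpa using this
      exact (s1.trans s2).trans s3
    · -- a x (v++[a]) ≡ x a (v++[a]) ≡ x (a v) ≡ a x v
      have s1 : HKR E (a :: x :: v ++ [a]) (x :: a :: v ++ [a]) := by
        have := HKR.append (p := [a,x]) (q := [x,a]) (u := v ++ [a]) (v := v ++ [a])
          (hkr_comm hxa.symm hE (ha x)) (HKR.refl _)
        simpa using this
      have s2 : HKR E (x :: a :: v ++ [a]) (x :: a :: v) := by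
        have := HKR.append (p := [x]) (q := [x]) (HKR.refl _) (ih hav)
        simpa using this
      have s3 : HKR E (x :: a :: v) (a :: x :: v) := by
        have := HKR.append (p := [x,a]) (q := [a,x]) (hkr_comm hxa (ha x) hE) (HKR.refl v)
        simpa using this
      exact (s1.trans s2).trans s3

/-- Sink deletion: if `a` is a sink and `a ∉ u`, then `a u a ≡ u a`. -/
lemma hkr_sink_del {a : V} (ha : ∀ z, ¬ E a z) :
    ∀ u : List V, a ∉ u → HKR E (a :: u ++ [a]) (u ++ [a]) := by
  intro u
  induction u using List.reverseRecOn with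
  | nil => intro _; exact hkr_idem a
  | append_singleton v y ih =>
    intro hnm
    have hya : y ≠ a := fun h => hnm (h ▸ List.mem_append_right v (List.mem_singleton_self y))
    have hav : a ∉ v := fun h => hnm (List.mem_append_left _ h)
    by_cases hE : E y a
    · -- a v [y,a] ≡ a v [a,y,a] ≡ (a v a) [y,a] ≡ (v a) [y,a] = v [a,y,a] ≡ v [y,a]
      have s1 : HKR E (a :: (v ++ [y]) ++ [a]) ((a :: v) ++ [a,y,a]) := by
        have := HKR.append (p := a :: v) (q := a :: v) (u := [y,a]) (v := [a,y,a])
          (HKR.refl _) (hkr_sink_nbr hE (ha y)).symm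
        simpa using this
      have s2 : HKR E ((a :: v) ++ [a,y,a]) ((v ++ [a]) ++ [y,a]) := by
        have := HKR.append (p := a :: v ++ [a]) (q := v ++ [a]) (u := [y,a]) (v := [y,a])
          (ih hav) (HKR.refl _)
        simpa using this
      have s3 : HKR E ((v ++ [a]) ++ [y,a]) ((v ++ [y]) ++ [a]) := by
        have := HKR.append (p := v) (q := v) (u := [a,y,a]) (v := [y,a])
          (HKR.refl _) (hkr_sink_nbr hE (ha y))
        simpa using this
      exact (s1.trans s2).trans s3
    · -- a v [y,a] ≡ a v [a,y] ≡ (v a) [y] ≡ v [y,a]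
      have s1 : HKR E (a :: (v ++ [y]) ++ [a]) ((a :: v) ++ [a,y]) := by
        have := HKR.append (p := a :: v) (q := a :: v) (u := [y,a]) (v := [a,y])
          (HKR.refl _) (hkr_comm hya hE (ha y))
        simpa using this
      have s2 : HKR E ((a :: v) ++ [a,y]) ((v ++ [a]) ++ [y]) := by
        have := HKR.append (p := a :: v ++ [a]) (q := v ++ [a]) (u := [y]) (v := [y])
          (ih hav) (HKR.refl _)
        simpa using this
      have s3 : HKR E ((v ++ [a]) ++ [y]) ((v ++ [y]) ++ [a]) := by
        have := HKR.append (p := v) (q := v) (u := [a,y]) (v := [y,a])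
          (HKR.refl _) (hkr_comm (Ne.symm hya) (ha y) hE)
        simpa using this
      exact (s1.trans s2).trans s3

lemma exists_split_first {a : V} {l : List V} (h : a ∈ l) :
    ∃ p t, l = p ++ a :: t ∧ a ∉ p := by
  induction l with
  | nil => simp at h
  | cons x v ih =>
    by_cases hx : x = a
    · exact ⟨[], v, by simp [hx], by simp⟩
    · have : a ∈ v := by
        rcases List.mem_cons.mp h with h' | h'
        · exact absurd h'.symm hx
        · exact h'
      obtain ⟨p, t, hpt, hnp⟩ := ih this
      exact ⟨x :: p, t, by simp [hpt], by simp [hnp, Ne.symm hx]⟩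

end HKaux

section HKmain

open List

variable {V : Type*} [DecidableEq V] {E : V → V → Prop}

/-- One deletion step: if some `a ∈ A` occurs at least twice, we can pass to a shorter
equivalent sublist. -/
lemma hkr_delete_step {A : Set V} (hA : ∀ a ∈ A, (∀ z, ¬ E z a) ∨ (∀ z, ¬ E a z))
    {a : V} (haA : a ∈ A) {w : List V} (h2 : 2 ≤ w.count a) :
    ∃ w1 : List V, w1.Sublist w ∧ w1.length < w.length ∧ HKR E w1 w := by
  have hmem : a ∈ w := List.count_pos_iff.mp (by omega)
  obtain ⟨p, t, hw, hnp⟩ := exists_split_first hmem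
  have hmt : a ∈ t := by
    by_contra hat
    have : w.count a ≤ 1 := by
      rw [hw]
      simp [List.count_append, List.count_cons, List.count_eq_zero_of_not_mem hat,
        List.count_eq_zero_of_not_mem hnp]
    omega
  obtain ⟨m, s, ht, hnm⟩ := exists_split_first hmt
  subst ht; subst hw
  rcases hA a haA with hsrc | hsink
  · refine ⟨p ++ (a :: m) ++ s, ?_, ?_, ?_⟩
    · have h1 : (a :: m) ++ s <+ (a :: m ++ [a]) ++ s :=
        (List.sublist_append_left (a :: m) [a]).append_right s
      have := h1.append_left p
      simpa using this
    · simp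
    · have := HKR.append (HKR.refl p)
        (HKR.append ((hkr_source_del hsrc m hnm).symm) (HKR.refl s))
      simpa using this
  · refine ⟨p ++ (m ++ [a]) ++ s, ?_, ?_, ?_⟩
    · have h1 : m ++ [a] <+ a :: (m ++ [a]) := List.sublist_cons_self a _
      have h2 : (m ++ [a]) ++ s <+ (a :: m ++ [a]) ++ s := h1.append_right s
      have := h2.append_left p
      simpa using this
    · simp
    · have := HKR.append (HKR.refl p)
        (HKR.append ((hkr_sink_del hsink m hnm).symm) (HKR.refl s))
      simpa using this

lemma hkr_main {A : Set V} (hA : ∀ a ∈ A, (∀ z, ¬ E z a) ∨ (∀ z, ¬ E a z)) :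
    ∀ n (w : List V), w.length ≤ n →
      ∃ w' : List V, w'.Sublist w ∧ HKR E w' w ∧ ∀ a ∈ A, w'.count a ≤ 1 := by
  intro n
  induction n with
  | zero =>
    intro w hw
    have : w = [] := List.eq_nil_of_length_eq_zero (Nat.le_zero.mp hw)
    subst this
    exact ⟨[], List.Sublist.refl _, HKR.refl _, by simp⟩
  | succ n ih =>
    intro w hw
    by_cases hall : ∀ a ∈ A, w.count a ≤ 1
    · exact ⟨w, List.Sublist.refl _, HKR.refl _, hall⟩
    · push_neg at hall
      obtain ⟨a, haA, ha2⟩ := hall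
      have ha2' : 2 ≤ w.count a := by omega
      obtain ⟨w1, hsub, hlen, hr⟩ := hkr_delete_step hA haA ha2'
      obtain ⟨w', hsub', hr', hcount⟩ := ih w1 (by omega)
      exact ⟨w', hsub'.trans hsub, hr'.trans hr, hcount⟩

end HKmain

/-- For a set `A` of vertices each of which is a source or a sink, every word `w` is
equivalent in the Hecke-Kiselman monoid to a subword of `w` in which every vertex of `A`
occurs at most once. -/
theorem hk_multiplicity_free_subword {V : Type*} [DecidableEq V] (E : V → V → Prop)
    (hbidir : ∀ x y, ¬ (E x y ∧ E y x)) (hloop : ∀ x, ¬ E x x)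
    (A : Set V) (hA : ∀ a ∈ A, (∀ z, ¬ E z a) ∨ (∀ z, ¬ E a z))
    (w : FreeMonoid V) :
    ∃ w' : FreeMonoid V, (FreeMonoid.toList w').Sublist (FreeMonoid.toList w) ∧
      HKmk E w' = HKmk E w ∧
      ∀ a ∈ A, (FreeMonoid.toList w').count a ≤ 1 := by
  obtain ⟨l', hsub, hr, hcount⟩ :=
    hkr_main (E := E) hA (FreeMonoid.toList w).length (FreeMonoid.toList w) le_rfl
  refine ⟨FreeMonoid.ofList l', hsub, ?_, hcount⟩
  exact (Con.eq _).mpr hr
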